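/- Let λ₁, E₀ ∈ ℂ with λ₁ ≠ 0, and let φ₁, φ₂ : ℝ → ℂ be differentiable functions satisfying the Hamiltonian system dφ₁/dx = (φ₁² + φ₂²)φ₂ + λ₁φ₁, dφ₂/dx = −(φ₁² + φ₂²)φ₁ − λ₁φ₂, such that (φ₁(0)² + φ₂(0)²)² + 4λ₁φ₁(0)φ₂(0) = E₀. Then (φ₁(x)² + φ₂(x)²)² + 4λ₁φ₁(x)φ₂(x) = E₀ for all x ∈ ℝ; moreover, setting u := φ₁² + φ₂², if u(x) ≠ 0 for all x, then the function µ := −u'/(2u) satisfies (µ')² = 4(µ² − λ₁²)(µ² − λ₁² − E₀) on ℝ. -/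

import Mathlib

/-- The potential obtained from the nonlinearization constraint `u = φ₁² + φ₂²`. -/
def uOf (φ₁ φ₂ : ℝ → ℂ) : ℝ → ℂ := fun x => (φ₁ x) ^ 2 + (φ₂ x) ^ 2

/-- The auxiliary function `µ = -u'/(2u)`. -/
noncomputable def muOf (φ₁ φ₂ : ℝ → ℂ) : ℝ → ℂ := fun x => -(deriv (uOf φ₁ φ₂) x) / (2 * uOf φ₁ φ₂ x)

/-- conservation of the Hamiltonian for the nonlinearized AKNS system and
the closed ODE for `µ = -u'/(2u)`. -/
theorem stmt_1 (lam E₀ : ℂ) (hlam : lam ≠ 0) (φ₁ φ₂ : ℝ → ℂ)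
    (h1 : Differentiable ℝ φ₁) (h2 : Differentiable ℝ φ₂)
    (hH1 : ∀ x, deriv φ₁ x = ((φ₁ x) ^ 2 + (φ₂ x) ^ 2) * φ₂ x + lam * φ₁ x)
    (hH2 : ∀ x, deriv φ₂ x = -(((φ₁ x) ^ 2 + (φ₂ x) ^ 2) * φ₁ x) - lam * φ₂ x)
    (h0 : ((φ₁ 0) ^ 2 + (φ₂ 0) ^ 2) ^ 2 + 4 * lam * φ₁ 0 * φ₂ 0 = E₀) :
    (∀ x, ((φ₁ x) ^ 2 + (φ₂ x) ^ 2) ^ 2 + 4 * lam * φ₁ x * φ₂ x = E₀) ∧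
    ((∀ x, uOf φ₁ φ₂ x ≠ 0) →
      ∀ x, (deriv (muOf φ₁ φ₂) x) ^ 2
        = 4 * ((muOf φ₁ φ₂ x) ^ 2 - lam ^ 2) * ((muOf φ₁ φ₂ x) ^ 2 - lam ^ 2 - E₀)) := by
  have hφ₁ : ∀ x, HasDerivAt φ₁ (((φ₁ x) ^ 2 + (φ₂ x) ^ 2) * φ₂ x + lam * φ₁ x) x := by
    intro x; have := (h1 x).hasDerivAt; rwa [hH1 x] at this
  have hφ₂ : ∀ x, HasDerivAt φ₂ (-(((φ₁ x) ^ 2 + (φ₂ x) ^ 2) * φ₁ x) - lam * φ₂ x) x := by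
    intro x; have := (h2 x).hasDerivAt; rwa [hH2 x] at this
  have hU : ∀ x, HasDerivAt (uOf φ₁ φ₂) (2 * lam * ((φ₁ x) ^ 2 - (φ₂ x) ^ 2)) x := by
    intro x
    have h := ((hφ₁ x).mul (hφ₁ x)).add ((hφ₂ x).mul (hφ₂ x))
    convert h using 1
    · rfl
    · funext y; simp only [uOf, Pi.add_apply, Pi.mul_apply, Pi.sub_apply, Pi.neg_apply, Pi.pow_apply]; ring
    · ring
  have hcons : ∀ x, ((φ₁ x) ^ 2 + (φ₂ x) ^ 2) ^ 2 + 4 * lam * φ₁ x * φ₂ x = E₀ := by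
    have hHd : ∀ x, HasDerivAt
        (fun y => ((φ₁ y) ^ 2 + (φ₂ y) ^ 2) ^ 2 + 4 * lam * φ₁ y * φ₂ y) 0 x := by
      intro x
      have h := ((hU x).mul (hU x)).add ((((hφ₁ x).mul (hφ₂ x)).const_mul (4 * lam)))
      convert h using 1
      · rfl
      · funext y; simp only [uOf, Pi.add_apply, Pi.mul_apply, Pi.sub_apply, Pi.neg_apply, Pi.pow_apply]; ring
      · simp only [uOf]; ring
    intro x
    have hc := is_const_of_deriv_eq_zero (f := fun y => ((φ₁ y) ^ 2 + (φ₂ y) ^ 2) ^ 2 + 4 * lam * φ₁ y * φ₂ y)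
      (fun y => (hHd y).differentiableAt) (fun y => (hHd y).deriv) x 0
    exact hc.trans h0
  refine ⟨hcons, ?_⟩
  intro hu x
  have hderiv_u : deriv (uOf φ₁ φ₂) = fun y => 2 * lam * ((φ₁ y) ^ 2 - (φ₂ y) ^ 2) :=
    funext fun y => (hU y).deriv
  have hmu : muOf φ₁ φ₂ = fun y => -(2 * lam * ((φ₁ y) ^ 2 - (φ₂ y) ^ 2)) / (2 * uOf φ₁ φ₂ y) := by
    funext y; simp only [muOf, hderiv_u]
  have hN : HasDerivAt (fun y => -(2 * lam * ((φ₁ y) ^ 2 - (φ₂ y) ^ 2)))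
      (-(2 * lam * (2 * (uOf φ₁ φ₂ x) * (2 * φ₁ x * φ₂ x + lam)))) x := by
    have h := ((((hφ₁ x).mul (hφ₁ x)).sub ((hφ₂ x).mul (hφ₂ x))).const_mul (2 * lam)).neg
    convert h using 1
    · rfl
    · funext y; simp only [Pi.add_apply, Pi.mul_apply, Pi.sub_apply, Pi.neg_apply, Pi.pow_apply]; ring
    · simp only [uOf]; ring
  have hD : HasDerivAt (fun y => 2 * uOf φ₁ φ₂ y) (2 * (2 * lam * ((φ₁ x) ^ 2 - (φ₂ x) ^ 2))) x :=
    (hU x).const_mul 2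
  have hDne : 2 * uOf φ₁ φ₂ x ≠ 0 := mul_ne_zero two_ne_zero (hu x)
  have hMu : HasDerivAt (muOf φ₁ φ₂)
      ((-(2 * lam * (2 * (uOf φ₁ φ₂ x) * (2 * φ₁ x * φ₂ x + lam))) * (2 * uOf φ₁ φ₂ x)
        - (-(2 * lam * ((φ₁ x) ^ 2 - (φ₂ x) ^ 2))) * (2 * (2 * lam * ((φ₁ x) ^ 2 - (φ₂ x) ^ 2))))
        / (2 * uOf φ₁ φ₂ x) ^ 2) x := by
    rw [hmu]; exact hN.div hD hDne
  rw [hMu.deriv]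
  have hE : E₀ = ((φ₁ x) ^ 2 + (φ₂ x) ^ 2) ^ 2 + 4 * lam * φ₁ x * φ₂ x := (hcons x).symm
  have hmux : muOf φ₁ φ₂ x = -(2 * lam * ((φ₁ x) ^ 2 - (φ₂ x) ^ 2)) / (2 * uOf φ₁ φ₂ x) := by
    rw [hmu]
  rw [hmux, hE]
  have hune : (φ₁ x) ^ 2 + (φ₂ x) ^ 2 ≠ 0 := hu x
  simp only [uOf]
  field_simp
  ring
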